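/- Let R be a PID and Λ a free R-module of rank 2m with a non-degenerate alternating form of square-free level N, given a basis e_1,…,e_m,f_1,…,f_m for which the Gram matrix is (0 A; −ᵗA 0). Suppose det A = D (up to units) and d̃_1,…,d̃_m are divisors of N with d̃_1···d̃_m = D (up to units). Then M = ⊕ R e_i has a basis ẽ_1,…,ẽ_m and M' = ⊕ R f_i has a basis f̃_1,…,f̃_m with ⟨ẽ_i, f̃_j⟩ = d̃_i δ_{ij}. In particular the isometry class of (Λ,⟨,⟩) is determined by the class D·R^× together with m and N. -/

import Mathlib

set_option linter.unusedSectionVars false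
set_option maxHeartbeats 1000000

namespace Stmt3Aux

variable {R : Type*} [CommRing R] [IsDomain R] [IsPrincipalIdealRing R]

/-- Equivalence of square matrices over `R`. -/
def MatEquiv {ι : Type*} [Fintype ι] [DecidableEq ι] (A B : Matrix ι ι R) : Prop :=
  ∃ P Q : Matrix ι ι R, IsUnit P.det ∧ IsUnit Q.det ∧ P * A * Q = B

namespace MatEquiv

variable {ι : Type*} [Fintype ι] [DecidableEq ι]

theorem refl (A : Matrix ι ι R) : MatEquiv A A :=
  ⟨1, 1, by simp, by simp, by simp⟩

theorem symm {A B : Matrix ι ι R} (h : MatEquiv A B) : MatEquiv B A := by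
  obtain ⟨P, Q, hP, hQ, h⟩ := h
  refine ⟨P⁻¹, Q⁻¹, ?_, ?_, ?_⟩
  · exact Matrix.isUnit_nonsing_inv_det P hP
  · exact Matrix.isUnit_nonsing_inv_det Q hQ
  · rw [← h]
    calc P⁻¹ * (P * A * Q) * Q⁻¹ = P⁻¹ * P * A * (Q * Q⁻¹) := by
          simp only [Matrix.mul_assoc]
    _ = A := by rw [Matrix.nonsing_inv_mul _ hP, Matrix.mul_nonsing_inv _ hQ, Matrix.one_mul,
          Matrix.mul_one]

theorem trans {A B C : Matrix ι ι R} (h1 : MatEquiv A B) (h2 : MatEquiv B C) : MatEquiv A C := by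
  obtain ⟨P, Q, hP, hQ, h1⟩ := h1
  obtain ⟨P', Q', hP', hQ', h2⟩ := h2
  refine ⟨P' * P, Q * Q', ?_, ?_, ?_⟩
  · rw [Matrix.det_mul]; exact hP'.mul hP
  · rw [Matrix.det_mul]; exact hQ.mul hQ'
  · rw [← h2, ← h1]; simp only [Matrix.mul_assoc]

theorem det_associated {A B : Matrix ι ι R} (h : MatEquiv A B) : Associated A.det B.det := by
  obtain ⟨P, Q, hP, hQ, h⟩ := h
  obtain ⟨u, hu⟩ := hP
  obtain ⟨v, hv⟩ := hQ
  exact ⟨u * v, by rw [← h, Matrix.det_mul, Matrix.det_mul, ← hu, ← hv, Units.val_mul]; ring⟩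

end MatEquiv

/-- Bezout-style gcd in a PID. -/
theorem exists_gcd (x y : R) :
    ∃ g u v x' y' : R, g = u * x + v * y ∧ x = g * x' ∧ y = g * y' := by
  obtain ⟨g, hg⟩ : (Ideal.span {x, y}).IsPrincipal := inferInstance
  have hx : x ∈ Ideal.span ({x, y} : Set R) :=
    Ideal.subset_span (by simp)
  have hy : y ∈ Ideal.span ({x, y} : Set R) :=
    Ideal.subset_span (by simp)
  rw [hg] at hx hy
  obtain ⟨x', hx'⟩ := (Ideal.mem_span_singleton').mp hx
  obtain ⟨y', hy'⟩ := (Ideal.mem_span_singleton').mp hy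
  have hgmem : g ∈ Ideal.span ({x, y} : Set R) := by rw [hg]; exact Ideal.mem_span_singleton_self g
  obtain ⟨u, v, huv⟩ := Ideal.mem_span_pair.mp hgmem
  exact ⟨g, u, v, x', y', huv.symm, by rw [← hx']; ring, by rw [← hy']; ring⟩

/-- A prime not dividing `x` is coprime to it, in a PID. -/
theorem prime_coprime {p x : R} (hp : Prime p) (h : ¬ p ∣ x) : IsCoprime p x := by
  obtain ⟨g, u, v, p', x', hguv, hp', hx'⟩ := exists_gcd p x
  rcases hp.irreducible.isUnit_or_isUnit hp' with hu | hu
  · obtain ⟨w, hw⟩ := hu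
    refine ⟨((w⁻¹ : Rˣ) : R) * u, ((w⁻¹ : Rˣ) : R) * v, ?_⟩
    have hwg : ((w⁻¹ : Rˣ) : R) * g = 1 := by rw [← hw]; exact Units.inv_mul w
    calc ((w⁻¹ : Rˣ) : R) * u * p + ((w⁻¹ : Rˣ) : R) * v * x
        = ((w⁻¹ : Rˣ) : R) * (u * p + v * x) := by ring
    _ = 1 := by rw [← hguv]; exact hwg
  · exfalso
    obtain ⟨w, hw⟩ := hu
    apply h
    have hpg : p ∣ g := ⟨((w⁻¹ : Rˣ) : R), by
      rw [hp', ← hw]; rw [mul_assoc]; simp⟩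
    exact hpg.trans ⟨x', hx'⟩


theorem diag2 (a b : R) : Matrix.diagonal ![a, b] = !![a, 0; 0, b] := by
  ext i j
  fin_cases i <;> fin_cases j <;> simp [Matrix.diagonal]

/-- 2x2 gcd step. -/
theorem L2 {x y g x' y' u v : R} (hx : x = g * x') (hy : y = g * y')
    (hg : g = u * x + v * y) (hg0 : g ≠ 0) :
    MatEquiv (Matrix.diagonal ![x, y]) (Matrix.diagonal ![g, x' * y]) := by
  have h1 : u * x' + v * y' = 1 := by
    apply mul_left_cancel₀ hg0
    rw [mul_one]
    calc g * (u * x' + v * y') = u * (g * x') + v * (g * y') := by ring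
    _ = u * x + v * y := by rw [← hx, ← hy]
    _ = g := hg.symm
  refine ⟨!![u, v; -y', x'], !![1, -(v*y'); 1, 1 - v*y'], ?_, ?_, ?_⟩
  · rw [Matrix.det_fin_two_of]
    have : u * x' - v * -y' = 1 := by linear_combination h1
    rw [this]; exact isUnit_one
  · rw [Matrix.det_fin_two_of]
    have : 1 * (1 - v * y') - -(v * y') * 1 = 1 := by ring
    rw [this]; exact isUnit_one
  · subst hx hy
    ext i j
    fin_cases i <;> fin_cases j
    · simp [Matrix.mul_apply, Fin.sum_univ_two, Matrix.vecMul_diagonal, Matrix.vecMul]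
      linear_combination g * h1
    · simp [Matrix.mul_apply, Fin.sum_univ_two, Matrix.vecMul_diagonal, Matrix.vecMul]
      linear_combination (- g * v * y') * h1
    · simp [Matrix.mul_apply, Fin.sum_univ_two, Matrix.vecMul_diagonal, Matrix.vecMul]
      try ring
    · simp [Matrix.mul_apply, Fin.sum_univ_two, Matrix.vecMul_diagonal, Matrix.vecMul]
      try ring

variable {ι : Type*} [Fintype ι] [DecidableEq ι]

/-- Entrywise associated diagonal matrices are equivalent. -/
theorem rescale {d d' : ι → R} (h : ∀ i, Associated (d i) (d' i)) :
    MatEquiv (Matrix.diagonal d) (Matrix.diagonal d') := by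
  choose u hu using h
  refine ⟨Matrix.diagonal (fun i => ((u i : Rˣ) : R)), 1, ?_, by simp, ?_⟩
  · rw [Matrix.det_diagonal]
    exact IsUnit.of_mul_eq_one (∏ i, ((u i)⁻¹ : Rˣ)) (by
      rw [← Finset.prod_mul_distrib]
      simp)
  · rw [Matrix.mul_one, Matrix.diagonal_mul_diagonal]
    have : (fun i => ((u i : Rˣ) : R) * d i) = d' := funext fun i => by rw [← hu i]; ring
    rw [this]

theorem matEquiv_reindex {κ : Type*} [Fintype κ] [DecidableEq κ] (e : κ ≃ ι)
    {A B : Matrix ι ι R} (h : MatEquiv (A.submatrix e e) (B.submatrix e e)) :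
    MatEquiv A B := by
  obtain ⟨P, Q, hP, hQ, hh⟩ := h
  refine ⟨P.submatrix e.symm e.symm, Q.submatrix e.symm e.symm, ?_, ?_, ?_⟩
  · rwa [Matrix.det_submatrix_equiv_self]
  · rwa [Matrix.det_submatrix_equiv_self]
  · have : A = (A.submatrix (e : κ → ι) e).submatrix e.symm e.symm := by
      simp [Matrix.submatrix_submatrix]
    rw [this, Matrix.submatrix_mul_equiv, Matrix.submatrix_mul_equiv, hh]
    simp [Matrix.submatrix_submatrix]

theorem matEquiv_sum_left {κ : Type*} [Fintype κ] [DecidableEq κ]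
    {x x' : ι → R} (y : κ → R)
    (h : MatEquiv (Matrix.diagonal x) (Matrix.diagonal x')) :
    MatEquiv (Matrix.diagonal (Sum.elim x y)) (Matrix.diagonal (Sum.elim x' y)) := by
  obtain ⟨P, Q, hP, hQ, hh⟩ := h
  refine ⟨Matrix.fromBlocks P 0 0 1, Matrix.fromBlocks Q 0 0 1, ?_, ?_, ?_⟩
  · rw [Matrix.det_fromBlocks_zero₂₁]; simpa using hP
  · rw [Matrix.det_fromBlocks_zero₂₁]; simpa using hQ
  · rw [← Matrix.fromBlocks_diagonal, ← Matrix.fromBlocks_diagonal,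
      Matrix.fromBlocks_multiply, Matrix.fromBlocks_multiply]
    simp [hh]

/-- Apply a 2x2 equivalence at a pair of slots of a diagonal matrix. -/
theorem matEquiv_pair {d : ι → R} {i j : ι} (hij : i ≠ j) {x' y' : R}
    (h : MatEquiv (Matrix.diagonal ![d i, d j]) (Matrix.diagonal ![x', y'])) :
    MatEquiv (Matrix.diagonal d)
      (Matrix.diagonal (Function.update (Function.update d i x') j y')) := by
  set d' := Function.update (Function.update d i x') j y' with hd'
  let κ := {k : ι // k ≠ i ∧ k ≠ j}
  have hbij : Function.Bijective (Sum.elim ![i, j] (Subtype.val : κ → ι)) := by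
    constructor
    · rintro (a | a) (b | b) hab
      · fin_cases a <;> fin_cases b <;> simp_all
      · exfalso
        obtain ⟨bv, hb1, hb2⟩ := b
        fin_cases a
        · simp only [Sum.elim_inl, Sum.elim_inr, Matrix.cons_val_zero] at hab
          exact hb1 hab.symm
        · simp only [Sum.elim_inl, Sum.elim_inr, Matrix.cons_val_one, Matrix.head_cons] at hab
          exact hb2 hab.symm
      · exfalso
        obtain ⟨av, ha1, ha2⟩ := a
        fin_cases b
        · simp only [Sum.elim_inl, Sum.elim_inr, Matrix.cons_val_zero] at hab
          exact ha1 hab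
        · simp only [Sum.elim_inl, Sum.elim_inr, Matrix.cons_val_one, Matrix.head_cons] at hab
          exact ha2 hab
      · simp only [Sum.elim_inr] at hab; exact congrArg Sum.inr (Subtype.ext hab)
    · intro k
      by_cases h1 : k = i
      · exact ⟨Sum.inl 0, by simp [h1]⟩
      by_cases h2 : k = j
      · exact ⟨Sum.inl 1, by simp [h2]⟩
      · exact ⟨Sum.inr ⟨k, h1, h2⟩, rfl⟩
  let e : (Fin 2 ⊕ κ) ≃ ι := Equiv.ofBijective _ hbij
  apply matEquiv_reindex e
  rw [Matrix.submatrix_diagonal_equiv, Matrix.submatrix_diagonal_equiv]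
  have h1 : d ∘ e = Sum.elim ![d i, d j] (fun k : κ => d k.val) := by
    funext a
    rcases a with a | a
    · fin_cases a <;> simp [e, Equiv.ofBijective_apply]
    · simp [e, Equiv.ofBijective_apply]
  have h2 : d' ∘ e = Sum.elim ![x', y'] (fun k : κ => d k.val) := by
    funext a
    rcases a with a | a
    · fin_cases a <;>
        simp [e, Equiv.ofBijective_apply, hd', Function.update_of_ne hij,
          Function.update_of_ne (Ne.symm hij), Function.update_self]
    · simp [e, Equiv.ofBijective_apply, hd', Function.update_of_ne a.2.1,
        Function.update_of_ne a.2.2]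
  rw [h1, h2]
  exact matEquiv_sum_left _ h

/-- moving a prime from one slot to another. -/
theorem mmove2 {p z x : R} (hp : Prime p) (hpz : ¬ p ∣ z) (hpx : ¬ p ∣ x)
    (hz0 : z ≠ 0) (hx0 : x ≠ 0) :
    MatEquiv (Matrix.diagonal ![p * z, x]) (Matrix.diagonal ![z, p * x]) := by
  obtain ⟨g, u, v, a', b', hg, ha', hb'⟩ := exists_gcd (p * z) x
  obtain ⟨g₂, u₂, v₂, a₂, b₂, hg₂, ha₂, hb₂⟩ := exists_gcd z (p * x)
  have hg0 : g ≠ 0 := fun h => hx0 (by rw [hb', h, zero_mul])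
  have hg₂0 : g₂ ≠ 0 := fun h => hz0 (by rw [ha₂, h, zero_mul])
  have hgx : g ∣ x := ⟨b', hb'⟩
  have hgpz : g ∣ p * z := ⟨a', ha'⟩
  have hpg : ¬ p ∣ g := fun h => hpx (h.trans hgx)
  have hgz : g ∣ z := ((prime_coprime hp hpg).symm).dvd_of_dvd_mul_left hgpz
  have hg₂z : g₂ ∣ z := ⟨a₂, ha₂⟩
  have hg₂px : g₂ ∣ p * x := ⟨b₂, hb₂⟩
  have hpg₂ : ¬ p ∣ g₂ := fun h => hpz (h.trans hg₂z)
  have hg₂x : g₂ ∣ x := ((prime_coprime hp hpg₂).symm).dvd_of_dvd_mul_left hg₂px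
  have hgg₂ : g ∣ g₂ := by
    rw [hg₂]
    exact dvd_add (Dvd.dvd.mul_left hgz u₂) (Dvd.dvd.mul_left (hgx.mul_left p) v₂)
  have hg₂g : g₂ ∣ g := by
    rw [hg]
    exact dvd_add (Dvd.dvd.mul_left (hg₂z.mul_left p) u) (Dvd.dvd.mul_left hg₂x v)
  have hass : Associated g g₂ := associated_of_dvd_dvd hgg₂ hg₂g
  have e1 : MatEquiv (Matrix.diagonal ![p * z, x]) (Matrix.diagonal ![g, a' * x]) :=
    L2 ha' hb' hg hg0
  have e2 : MatEquiv (Matrix.diagonal ![z, p * x]) (Matrix.diagonal ![g₂, a₂ * (p * x)]) :=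
    L2 ha₂ hb₂ hg₂ hg₂0
  obtain ⟨w, hw⟩ := id hass
  have hax : a' * x * ((w⁻¹ : Rˣ) : R) = a₂ * (p * x) := by
    have key : g * (a' * x) = g * ((w : R) * (a₂ * (p * x))) := by
      calc g * (a' * x) = (g * a') * x := by ring
      _ = (p * z) * x := by rw [← ha']
      _ = (g₂ * a₂) * (p * x) := by rw [← ha₂]; ring
      _ = g * ((w : R) * (a₂ * (p * x))) := by rw [← hw]; ring
    have := mul_left_cancel₀ hg0 key
    calc a' * x * ((w⁻¹ : Rˣ) : R) = (w : R) * (a₂ * (p * x)) * ((w⁻¹ : Rˣ) : R) := by rw [this]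
    _ = a₂ * (p * x) * ((w : R) * ((w⁻¹ : Rˣ) : R)) := by ring
    _ = a₂ * (p * x) := by simp
  have emid : MatEquiv (Matrix.diagonal ![g, a' * x]) (Matrix.diagonal ![g₂, a₂ * (p * x)]) := by
    apply rescale
    intro i
    fin_cases i
    · simpa using hass
    · exact ⟨w⁻¹, by simpa using hax⟩
  exact (e1.trans emid).trans e2.symm


section Counting

open UniqueFactorizationMonoid
open scoped Classical

variable [NormalizationMonoid R]

theorem mem_nf {p x : R} (hp : Prime p) (hx : x ≠ 0) :
    normalize p ∈ normalizedFactors x ↔ p ∣ x := by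
  constructor
  · intro h
    exact ((associated_normalize p).dvd).trans (dvd_of_mem_normalizedFactors h)
  · intro h
    obtain ⟨q, hq, hpq⟩ := exists_mem_normalizedFactors_of_dvd hx hp.irreducible h
    have : normalize p = q := by
      rw [← normalize_normalized_factor q hq]
      exact normalize_eq_normalize hpq.dvd hpq.symm.dvd
    rwa [this]

theorem count_nf_le_one {p x : R} (hp : Prime p) (hx : x ≠ 0) (hsq : Squarefree x) :
    Multiset.count (normalize p) (normalizedFactors x) ≤ 1 := by
  by_contra hc
  push_neg at hc
  have h2 : Multiset.replicate 2 (normalize p) ≤ normalizedFactors x := by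
    rw [← Multiset.le_count_iff_replicate_le]; omega
  have hdvd : normalize p * normalize p ∣ x := by
    have h3 : (Multiset.replicate 2 (normalize p)).prod ∣ (normalizedFactors x).prod :=
      Multiset.prod_dvd_prod_of_le h2
    rw [Multiset.prod_replicate, pow_two] at h3
    exact h3.trans (prod_normalizedFactors hx).dvd
  have hu := hsq _ hdvd
  exact hp.not_unit ((associated_normalize p).symm.isUnit hu)

theorem count_nf_eq {p x : R} (hp : Prime p) (hx : x ≠ 0) (hsq : Squarefree x) :
    Multiset.count (normalize p) (normalizedFactors x) = if p ∣ x then 1 else 0 := by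
  split_ifs with h
  · have h1 : 1 ≤ Multiset.count (normalize p) (normalizedFactors x) :=
      Multiset.one_le_count_iff_mem.mpr ((mem_nf hp hx).mpr h)
    have h2 := count_nf_le_one hp hx hsq
    omega
  · rw [Multiset.count_eq_zero]
    exact fun hm => h ((mem_nf hp hx).mp hm)

theorem nf_prod {d : ι → R} (hd : ∀ i, d i ≠ 0) :
    normalizedFactors (∏ i, d i) = ∑ i, normalizedFactors (d i) := by
  classical
  induction (Finset.univ : Finset ι) using Finset.induction_on with
  | empty => simp [normalizedFactors_one]
  | @insert a s ha IH =>
      rw [Finset.prod_insert ha, Finset.sum_insert ha, ← IH,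
        normalizedFactors_mul (hd a) (Finset.prod_ne_zero_iff.mpr fun i _ => hd i)]

theorem card_filter_dvd_eq {d dt : ι → R} {p : R} (hp : Prime p)
    (hd0 : ∀ i, d i ≠ 0) (hdt0 : ∀ i, dt i ≠ 0)
    (hsqd : ∀ i, Squarefree (d i)) (hsqdt : ∀ i, Squarefree (dt i))
    (hprod : Associated (∏ i, d i) (∏ i, dt i)) :
    (Finset.univ.filter fun i => p ∣ d i).card
      = (Finset.univ.filter fun i => p ∣ dt i).card := by
  have key : ∀ (c : ι → R), (∀ i, c i ≠ 0) → (∀ i, Squarefree (c i)) →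
      (Finset.univ.filter fun i => p ∣ c i).card
        = Multiset.count (normalize p) (normalizedFactors (∏ i, c i)) := by
    intro c h0 hsq
    rw [nf_prod h0, Multiset.count_sum']
    rw [Finset.card_filter]
    exact Finset.sum_congr rfl fun i _ => by rw [count_nf_eq hp (h0 i) (hsq i)]
  rw [key d hd0 hsqd, key dt hdt0 hsqdt, hprod.normalizedFactors_eq]

end Counting


section Main

open UniqueFactorizationMonoid Finset
open scoped Classical

theorem cons_sub_of_not_mem {q : R} {M B : Multiset R} (h : q ∉ B) :
    (q ::ₘ M) - B = q ::ₘ (M - B) := by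
  ext a
  rw [Multiset.count_sub, Multiset.count_cons, Multiset.count_cons, Multiset.count_sub]
  have hqB : Multiset.count q B = 0 := Multiset.count_eq_zero.mpr h
  by_cases h' : a = q
  · subst h'; rw [hqB]; omega
  · simp [h']

theorem cons_sub_of_mem {q : R} {M B : Multiset R} (hM : q ∉ M) (hB : q ∈ B) :
    (q ::ₘ M) - B = M - B := by
  ext a
  rw [Multiset.count_sub, Multiset.count_cons, Multiset.count_sub]
  have hqM : Multiset.count q M = 0 := Multiset.count_eq_zero.mpr hM
  have hqB : 1 ≤ Multiset.count q B := Multiset.one_le_count_iff_mem.mpr hB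
  by_cases h' : a = q
  · subst h'
    rw [hqM]
    norm_num
    omega
  · simp [h']

theorem diag_equiv_diag {N : R} (hNsf : Squarefree N) {d dt : ι → R}
    (hdN : ∀ i, d i ∣ N) (hdtN : ∀ i, dt i ∣ N)
    (hd0 : ∀ i, d i ≠ 0) (hdt0 : ∀ i, dt i ≠ 0)
    (hprod : Associated (∏ i, d i) (∏ i, dt i)) :
    MatEquiv (Matrix.diagonal d) (Matrix.diagonal dt) := by
  letI : NormalizationMonoid R := UniqueFactorizationMonoid.strongNormalizationMonoid.toNormalizationMonoid
  have hsqdt : ∀ i, Squarefree (dt i) := fun i => Squarefree.squarefree_of_dvd (hdtN i) hNsf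
  suffices H : ∀ n (d : ι → R), (∀ i, d i ∣ N) → (∀ i, d i ≠ 0) →
      Associated (∏ i, d i) (∏ i, dt i) →
      (∑ i, ((normalizedFactors (d i)) - (normalizedFactors (dt i))).card) = n →
      MatEquiv (Matrix.diagonal d) (Matrix.diagonal dt) by
    exact H _ d hdN hd0 hprod rfl
  intro n
  induction n using Nat.strong_induction_on with
  | _ n IH =>
  intro d hdN hd0 hprod hn
  have hsqd : ∀ i, Squarefree (d i) := fun i => Squarefree.squarefree_of_dvd (hdN i) hNsf
  by_cases hall : ∀ i, d i ∣ dt i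
  · choose c hc using hall
    have hprodc : (∏ i, d i) * (∏ i, c i) = ∏ i, dt i := by
      rw [← Finset.prod_mul_distrib]
      exact Finset.prod_congr rfl fun i _ => (hc i).symm
    obtain ⟨w, hw⟩ := hprod
    have hdprod0 : (∏ i, d i) ≠ 0 := Finset.prod_ne_zero_iff.mpr fun i _ => hd0 i
    have hcu : (∏ i, c i) = (w : R) := mul_left_cancel₀ hdprod0 (by rw [hprodc, hw])
    have hcunit : IsUnit (∏ i, c i) := hcu ▸ w.isUnit
    apply rescale
    intro i
    have hciu : IsUnit (c i) :=
      isUnit_of_dvd_unit (Finset.dvd_prod_of_mem c (Finset.mem_univ i)) hcunit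
    exact ⟨hciu.unit, by rw [IsUnit.unit_spec]; exact (hc i).symm⟩
  · push_neg at hall
    obtain ⟨i₁, hndvd⟩ := hall
    obtain ⟨g, u, v, r, s, hguv, hr, hs⟩ := exists_gcd (d i₁) (dt i₁)
    have hrne : ¬ IsUnit r := by
      intro hru
      apply hndvd
      obtain ⟨w, hw⟩ := hru
      have hdg : d i₁ ∣ g := ⟨((w⁻¹ : Rˣ) : R), by rw [hr, ← hw, mul_assoc]; simp⟩
      exact hdg.trans ⟨s, hs⟩
    have hr0 : r ≠ 0 := fun h => hd0 i₁ (by rw [hr, h, mul_zero])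
    obtain ⟨p, hpirr, hpr⟩ := WfDvdMonoid.exists_irreducible_factor hrne hr0
    have hp : Prime p := hpirr.prime
    have hpd1 : p ∣ d i₁ := hpr.trans ⟨g, by rw [hr]; ring⟩
    have hpdt1 : ¬ p ∣ dt i₁ := by
      intro hdvd
      have hpg : p ∣ g := by rw [hguv]; exact dvd_add (hpd1.mul_left u) (hdvd.mul_left v)
      have hpp : p * p ∣ d i₁ := by rw [hr]; exact mul_dvd_mul hpg hpr
      exact hp.not_unit (hsqd i₁ p hpp)
    have hcard := card_filter_dvd_eq hp hd0 hdt0 hsqd hsqdt hprod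
    have hi₁S : i₁ ∈ Finset.univ.filter (fun i => p ∣ d i) := by simp [hpd1]
    have hex : ∃ i₂, p ∣ dt i₂ ∧ ¬ p ∣ d i₂ := by
      by_contra hcon
      push_neg at hcon
      have hsub : (Finset.univ.filter fun i => p ∣ dt i)
          ⊆ (Finset.univ.filter fun i => p ∣ d i).erase i₁ := by
        intro k hk
        rw [Finset.mem_erase]
        simp only [Finset.mem_filter, Finset.mem_univ, true_and] at hk ⊢
        exact ⟨fun h => hpdt1 (h ▸ hk), hcon k hk⟩
      have h1 := Finset.card_le_card hsub
      rw [Finset.card_erase_of_mem hi₁S] at h1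
      have h2 : 0 < (Finset.univ.filter fun i => p ∣ d i).card :=
        Finset.card_pos.mpr ⟨i₁, hi₁S⟩
      omega
    obtain ⟨i₂, hpdt2, hpd2⟩ := hex
    have hne : i₁ ≠ i₂ := fun h => hpd2 (h ▸ hpd1)
    obtain ⟨z, hz⟩ := hpd1
    have hz0 : z ≠ 0 := fun h => hd0 i₁ (by rw [hz, h, mul_zero])
    have hpz : ¬ p ∣ z := by
      intro hdvd
      have hpp : p * p ∣ d i₁ := by rw [hz]; exact mul_dvd_mul_left p hdvd
      exact hp.not_unit (hsqd i₁ p hpp)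
    have move : MatEquiv (Matrix.diagonal ![d i₁, d i₂]) (Matrix.diagonal ![z, p * d i₂]) := by
      rw [hz]; exact mmove2 hp hpz hpd2 hz0 (hd0 i₂)
    set d' := Function.update (Function.update d i₁ z) i₂ (p * d i₂) with hd'def
    have step : MatEquiv (Matrix.diagonal d) (Matrix.diagonal d') := matEquiv_pair hne move
    have hd'i₁ : d' i₁ = z := by
      rw [hd'def, Function.update_of_ne hne, Function.update_self]
    have hd'i₂ : d' i₂ = p * d i₂ := by rw [hd'def, Function.update_self]
    have hd'other : ∀ k, k ≠ i₁ → k ≠ i₂ → d' k = d k := fun k h1 h2 => by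
      rw [hd'def, Function.update_of_ne h2, Function.update_of_ne h1]
    have hzdvd : z ∣ d i₁ := ⟨p, by rw [hz]; ring⟩
    have hdN' : ∀ i, d' i ∣ N := by
      intro k
      by_cases h1 : k = i₂
      · subst h1
        rw [hd'i₂]
        exact (prime_coprime hp hpd2).mul_dvd (hpdt2.trans (hdtN k)) (hdN k)
      by_cases h2 : k = i₁
      · subst h2; rw [hd'i₁]; exact hzdvd.trans (hdN k)
      · rw [hd'other k h2 h1]; exact hdN k
    have hd0' : ∀ i, d' i ≠ 0 := by
      intro k
      by_cases h1 : k = i₂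
      · subst h1; rw [hd'i₂]; exact mul_ne_zero hp.ne_zero (hd0 k)
      by_cases h2 : k = i₁
      · subst h2; rw [hd'i₁]; exact hz0
      · rw [hd'other k h2 h1]; exact hd0 k
    have hi₁erase : i₁ ∈ Finset.univ.erase i₂ :=
      Finset.mem_erase.mpr ⟨hne, Finset.mem_univ i₁⟩
    have hprodeq : (∏ i, d' i) = ∏ i, d i := by
      rw [← Finset.mul_prod_erase Finset.univ d' (Finset.mem_univ i₂),
        ← Finset.mul_prod_erase Finset.univ d (Finset.mem_univ i₂),
        ← Finset.mul_prod_erase _ d' hi₁erase, ← Finset.mul_prod_erase _ d hi₁erase]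
      have hrest : (∏ k ∈ (Finset.univ.erase i₂).erase i₁, d' k)
          = ∏ k ∈ (Finset.univ.erase i₂).erase i₁, d k := by
        refine Finset.prod_congr rfl fun k hk => ?_
        rw [Finset.mem_erase, Finset.mem_erase] at hk
        exact hd'other k hk.1 hk.2.1
      rw [hrest, hd'i₁, hd'i₂, hz]
      ring
    -- measure bookkeeping
    set q : R := normalize p with hq
    have hnfz : normalizedFactors (d i₁) = q ::ₘ normalizedFactors z := by
      rw [hz, normalizedFactors_mul hp.ne_zero hz0, normalizedFactors_irreducible hpirr]
      rfl
    have hnfpx : normalizedFactors (p * d i₂) = q ::ₘ normalizedFactors (d i₂) := by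
      rw [normalizedFactors_mul hp.ne_zero (hd0 i₂), normalizedFactors_irreducible hpirr]
      rfl
    have hqB1 : q ∉ normalizedFactors (dt i₁) := fun hm =>
      hpdt1 ((mem_nf hp (hdt0 i₁)).mp (hq ▸ hm))
    have hqB2 : q ∈ normalizedFactors (dt i₂) := (mem_nf hp (hdt0 i₂)).mpr hpdt2
    have hqM2 : q ∉ normalizedFactors (d i₂) := fun hm =>
      hpd2 ((mem_nf hp (hd0 i₂)).mp (hq ▸ hm))
    have hF1 : ((normalizedFactors (d i₁)) - (normalizedFactors (dt i₁))).card
        = ((normalizedFactors (d' i₁)) - (normalizedFactors (dt i₁))).card + 1 := by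
      rw [hd'i₁, hnfz, cons_sub_of_not_mem hqB1, Multiset.card_cons]
    have hF2 : ((normalizedFactors (d' i₂)) - (normalizedFactors (dt i₂))).card
        = ((normalizedFactors (d i₂)) - (normalizedFactors (dt i₂))).card := by
      rw [hd'i₂, hnfpx, cons_sub_of_mem hqM2 hqB2]
    have hsum : (∑ i, ((normalizedFactors (d' i)) - (normalizedFactors (dt i))).card) + 1 = n := by
      rw [← hn]
      rw [← Finset.add_sum_erase Finset.univ _ (Finset.mem_univ i₁),
        ← Finset.add_sum_erase Finset.univ
          (fun i => ((normalizedFactors (d i)) - (normalizedFactors (dt i))).card)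
          (Finset.mem_univ i₁)]
      have hrest : (∑ k ∈ Finset.univ.erase i₁,
            ((normalizedFactors (d' k)) - (normalizedFactors (dt k))).card)
          = ∑ k ∈ Finset.univ.erase i₁,
            ((normalizedFactors (d k)) - (normalizedFactors (dt k))).card := by
        refine Finset.sum_congr rfl fun k hk => ?_
        rw [Finset.mem_erase] at hk
        by_cases h1 : k = i₂
        · subst h1; rw [hF2]
        · rw [hd'other k hk.1 h1]
      rw [hrest, hF1]
      ring
    have hlt : (∑ i, ((normalizedFactors (d' i)) - (normalizedFactors (dt i))).card) < n := by
      omega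
    exact step.trans (IH _ hlt d' hdN' hd0' (hprodeq ▸ hprod) rfl)

end Main


section StepA

open Matrix

theorem exists_matEquiv_diagonal (A : Matrix ι ι R) (hA : A.det ≠ 0) :
    ∃ d : ι → R, MatEquiv A (Matrix.diagonal d) := by
  classical
  have hinj : Function.Injective (Matrix.toLin' A) := by
    intro x y hxy
    simp only [Matrix.toLin'_apply] at hxy
    have h2 : A.adjugate *ᵥ (A *ᵥ x) = A.adjugate *ᵥ (A *ᵥ y) := by rw [hxy]
    rw [Matrix.mulVec_mulVec, Matrix.mulVec_mulVec, Matrix.adjugate_mul,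
      Matrix.smul_mulVec, Matrix.smul_mulVec, Matrix.one_mulVec,
      Matrix.one_mulVec] at h2
    funext i
    have := congrFun h2 i
    simp only [Pi.smul_apply, smul_eq_mul] at this
    exact mul_left_cancel₀ hA this
  set L := Matrix.toLin' A with hL
  set S := LinearMap.range L with hS
  obtain ⟨nn, snf⟩ := Submodule.smithNormalForm (Pi.basisFun R ι) S
  obtain ⟨bM, bN, f, a, hsnf⟩ := snf
  let eqv : (ι → R) ≃ₗ[R] S := LinearEquiv.ofInjective L hinj
  have hcard : nn = Fintype.card ι := by
    have h1 : Module.finrank R S = Fintype.card ι :=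
      Module.finrank_eq_card_basis ((Pi.basisFun R ι).map eqv)
    have h2 : Module.finrank R S = nn := by
      rw [Module.finrank_eq_card_basis bN, Fintype.card_fin]
    omega
  have hbij : Function.Bijective f := by
    rw [Fintype.bijective_iff_injective_and_card]
    exact ⟨f.injective, by rw [Fintype.card_fin]; exact hcard⟩
  let e : Fin nn ≃ ι := Equiv.ofBijective f hbij
  let bD : Module.Basis ι R (ι → R) := (bN.map eqv.symm).reindex e
  have key : ∀ r : ι, L (bD r) = a (e.symm r) • (bM r) := by
    intro r
    have h1 : bD r = eqv.symm (bN (e.symm r)) := by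
      simp [bD, Module.Basis.reindex_apply, Module.Basis.map_apply]
    have h2 : L (eqv.symm (bN (e.symm r))) = ((bN (e.symm r) : S) : ι → R) := by
      have := eqv.apply_symm_apply (bN (e.symm r))
      calc L (eqv.symm (bN (e.symm r)))
          = ((eqv (eqv.symm (bN (e.symm r))) : S) : ι → R) := rfl
      _ = ((bN (e.symm r) : S) : ι → R) := by rw [this]
    rw [h1, h2, hsnf (e.symm r)]
    congr 1
    show bM (f (e.symm r)) = bM r
    congr 1
    exact e.apply_symm_apply r
  set D := LinearMap.toMatrix bD bM L with hD
  have hDdiag : D = Matrix.diagonal (fun r => a (e.symm r)) := by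
    ext r s
    rw [hD, LinearMap.toMatrix_apply, key s]
    rw [_root_.map_smul, Finsupp.smul_apply, Module.Basis.repr_self]
    by_cases h : s = r
    · subst h; simp [Matrix.diagonal]
    · simp [Matrix.diagonal, Finsupp.single_apply, h, Ne.symm h]
  set b₀ := Pi.basisFun R ι with hb₀
  set P := LinearMap.toMatrix b₀ bM (LinearMap.id) with hP
  set Q := LinearMap.toMatrix bD b₀ (LinearMap.id) with hQ
  have hPunit : IsUnit P.det := by
    have h1 : P * LinearMap.toMatrix bM b₀ (LinearMap.id) = 1 := by
      rw [hP, ← LinearMap.toMatrix_comp bM b₀ bM LinearMap.id LinearMap.id,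
        LinearMap.id_comp, LinearMap.toMatrix_id]
    exact IsUnit.of_mul_eq_one _ (by
      rw [← Matrix.det_mul, h1, Matrix.det_one])
  have hQunit : IsUnit Q.det := by
    have h1 : Q * LinearMap.toMatrix b₀ bD (LinearMap.id) = 1 := by
      rw [hQ, ← LinearMap.toMatrix_comp b₀ bD b₀ LinearMap.id LinearMap.id,
        LinearMap.id_comp, LinearMap.toMatrix_id]
    exact IsUnit.of_mul_eq_one _ (by
      rw [← Matrix.det_mul, h1, Matrix.det_one])
  have hA' : LinearMap.toMatrix b₀ b₀ L = A := by
    rw [hb₀, LinearMap.toMatrix_eq_toMatrix', hL]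
    exact LinearMap.toMatrix'_toLin' A
  have hcomp : D = P * (LinearMap.toMatrix b₀ b₀ L) * Q := by
    rw [hD, hP, hQ]
    calc (LinearMap.toMatrix bD bM) L
        = LinearMap.toMatrix bD bM ((LinearMap.id.comp L).comp LinearMap.id) := by
          rw [LinearMap.comp_id, LinearMap.id_comp]
    _ = LinearMap.toMatrix b₀ bM (LinearMap.id.comp L)
          * LinearMap.toMatrix bD b₀ LinearMap.id := LinearMap.toMatrix_comp bD b₀ bM _ _
    _ = (LinearMap.toMatrix b₀ bM LinearMap.id * LinearMap.toMatrix b₀ b₀ L)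
          * LinearMap.toMatrix bD b₀ LinearMap.id := by
          rw [LinearMap.toMatrix_comp b₀ b₀ bM LinearMap.id L]
  refine ⟨fun r => a (e.symm r), P, Q, hPunit, hQunit, ?_⟩
  rw [← hA', ← hcomp]
  exact hDdiag

end StepA


section KeyMatrix

theorem key_matrix {A : Matrix ι ι R} {N : R} (hNsf : Squarefree N) (hA : A.det ≠ 0)
    (hlev : ∃ C : Matrix ι ι R, C * A = N • (1 : Matrix ι ι R))
    {dt : ι → R} (hdtN : ∀ i, dt i ∣ N) (hdtD : Associated (∏ i, dt i) A.det) :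
    ∃ P Q : Matrix ι ι R, IsUnit P.det ∧ IsUnit Q.det ∧ P * A * Q = Matrix.diagonal dt := by
  obtain ⟨d, hAd⟩ := exists_matEquiv_diagonal A hA
  obtain ⟨C, hC⟩ := hlev
  obtain ⟨P₀, Q₀, hP₀, hQ₀, h₀⟩ := id hAd
  have hE : (Q₀⁻¹ * C * P₀⁻¹) * Matrix.diagonal d = N • (1 : Matrix ι ι R) := by
    rw [← h₀]
    calc (Q₀⁻¹ * C * P₀⁻¹) * (P₀ * A * Q₀)
        = Q₀⁻¹ * (C * (P₀⁻¹ * P₀) * A) * Q₀ := by simp only [Matrix.mul_assoc]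
    _ = Q₀⁻¹ * (C * A) * Q₀ := by rw [Matrix.nonsing_inv_mul _ hP₀, Matrix.mul_one]
    _ = Q₀⁻¹ * (N • (1 : Matrix ι ι R)) * Q₀ := by rw [hC]
    _ = N • (Q₀⁻¹ * Q₀) := by
          rw [Matrix.mul_smul, Matrix.smul_mul, Matrix.mul_one]
    _ = N • (1 : Matrix ι ι R) := by rw [Matrix.nonsing_inv_mul _ hQ₀]
  have hdN : ∀ i, d i ∣ N := by
    intro i
    refine ⟨(Q₀⁻¹ * C * P₀⁻¹) i i, ?_⟩
    have h3 := congrFun (congrFun hE i) i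
    rw [Matrix.mul_diagonal] at h3
    rw [Matrix.smul_apply, Matrix.one_apply_eq, smul_eq_mul, mul_one] at h3
    rw [← h3]
    ring
  have hdD : Associated (∏ i, d i) A.det := by
    rw [← Matrix.det_diagonal]
    exact hAd.det_associated.symm
  have hdprod0 : (∏ i, d i) ≠ 0 := fun h => hA (by
    obtain ⟨w, hw⟩ := hdD
    rw [← hw, h, zero_mul])
  have hdtprod0 : (∏ i, dt i) ≠ 0 := fun h => hA (by
    obtain ⟨w, hw⟩ := hdtD
    rw [← hw, h, zero_mul])
  have hd0 : ∀ i, d i ≠ 0 := fun i h =>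
    hdprod0 (Finset.prod_eq_zero (Finset.mem_univ i) h)
  have hdt0 : ∀ i, dt i ≠ 0 := fun i h =>
    hdtprod0 (Finset.prod_eq_zero (Finset.mem_univ i) h)
  have hdd : MatEquiv (Matrix.diagonal d) (Matrix.diagonal dt) :=
    diag_equiv_diag hNsf hdN hdtN hd0 hdt0 (hdD.trans hdtD.symm)
  exact hAd.trans hdd

end KeyMatrix

section ModHelpers

variable {Λ : Type*} [AddCommGroup Λ] [Module R Λ]

theorem collapse {M Mi : Matrix ι ι R} (h : Mi * M = 1) (v : ι → Λ) (k : ι) :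
    ∑ i, Mi k i • (∑ l, M i l • v l) = v k := by
  calc ∑ i, Mi k i • (∑ l, M i l • v l)
      = ∑ i, ∑ l, (Mi k i * M i l) • v l := by
        refine Finset.sum_congr rfl fun i _ => ?_
        rw [Finset.smul_sum]
        exact Finset.sum_congr rfl fun l _ => (smul_smul _ _ _)
  _ = ∑ l, ∑ i, (Mi k i * M i l) • v l := Finset.sum_comm
  _ = ∑ l, (∑ i, Mi k i * M i l) • v l := by
        refine Finset.sum_congr rfl fun l _ => ?_
        rw [Finset.sum_smul]
  _ = ∑ l, (Mi * M) k l • v l := by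
        refine Finset.sum_congr rfl fun l _ => ?_
        rw [Matrix.mul_apply]
  _ = v k := by
        rw [h]
        simp [Matrix.one_apply]

theorem unit_change {v : ι → Λ} (hv : LinearIndependent R v)
    (P : Matrix ι ι R) (hP : IsUnit P.det) :
    LinearIndependent R (fun i => ∑ k, P i k • v k) ∧
      Submodule.span R (Set.range (fun i => ∑ k, P i k • v k))
        = Submodule.span R (Set.range v) := by
  have hPP : P * P⁻¹ = 1 := Matrix.mul_nonsing_inv _ hP
  have hPP' : P⁻¹ * P = 1 := Matrix.nonsing_inv_mul _ hP
  set w := fun i => ∑ k, P i k • v k with hw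
  constructor
  · rw [Fintype.linearIndependent_iff]
    intro g hg
    have hcoef : ∀ k, ∑ i, g i * P i k = 0 := by
      have hgw : ∑ i, g i • w i = ∑ k, (∑ i, g i * P i k) • v k := by
        calc ∑ i, g i • w i = ∑ i, ∑ k, (g i * P i k) • v k := by
              refine Finset.sum_congr rfl fun i _ => ?_
              rw [hw, Finset.smul_sum]
              exact Finset.sum_congr rfl fun k _ => (smul_smul _ _ _)
        _ = ∑ k, ∑ i, (g i * P i k) • v k := Finset.sum_comm
        _ = ∑ k, (∑ i, g i * P i k) • v k := by
              refine Finset.sum_congr rfl fun k _ => ?_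
              rw [Finset.sum_smul]
      have h2 : ∑ k, (∑ i, g i * P i k) • v k = 0 := by rw [← hgw, hg]
      exact fun k => (Fintype.linearIndependent_iff.mp hv) _ h2 k
    intro j
    have hgj : g j = ∑ k, (∑ i, g i * P i k) * P⁻¹ k j := by
      calc g j = ∑ i, g i * (if i = j then (1:R) else 0) := by
            simp [mul_ite]
      _ = ∑ i, g i * (P * P⁻¹) i j := by
            refine Finset.sum_congr rfl fun i _ => ?_
            rw [hPP, Matrix.one_apply]
      _ = ∑ i, g i * (∑ k, P i k * P⁻¹ k j) := by
            refine Finset.sum_congr rfl fun i _ => ?_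
            rw [Matrix.mul_apply]
      _ = ∑ i, ∑ k, g i * (P i k * P⁻¹ k j) := by
            refine Finset.sum_congr rfl fun i _ => ?_
            rw [Finset.mul_sum]
      _ = ∑ k, ∑ i, g i * (P i k * P⁻¹ k j) := Finset.sum_comm
      _ = ∑ k, (∑ i, g i * P i k) * P⁻¹ k j := by
            refine Finset.sum_congr rfl fun k _ => ?_
            rw [Finset.sum_mul]
            exact Finset.sum_congr rfl fun i _ => by ring
    rw [hgj]
    simp only [hcoef, zero_mul, Finset.sum_const_zero]
  · apply le_antisymm
    · rw [Submodule.span_le]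
      rintro x ⟨i, rfl⟩
      exact Submodule.sum_mem _ fun k _ =>
        Submodule.smul_mem _ _ (Submodule.subset_span (Set.mem_range_self k))
    · rw [Submodule.span_le]
      rintro x ⟨k, rfl⟩
      have : v k = ∑ i, (P⁻¹) k i • w i := (collapse hPP' v k).symm
      rw [this]
      exact Submodule.sum_mem _ fun i _ =>
        Submodule.smul_mem _ _ (Submodule.subset_span (Set.mem_range_self i))

end ModHelpers


section Part1

variable {Λ : Type*} [AddCommGroup Λ] [Module R Λ]

theorem level_matrix {m : ℕ} (B : LinearMap.BilinForm R Λ) {N : R}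
    (hlevel : ∀ φ : Λ →ₗ[R] R, ∃ v : Λ, ∀ x, N * φ x = B v x)
    (b : Module.Basis (Fin m ⊕ Fin m) R Λ) (A : Matrix (Fin m) (Fin m) R)
    (hff : ∀ i j, B (b (Sum.inr i)) (b (Sum.inr j)) = 0)
    (hef : ∀ i j, B (b (Sum.inl i)) (b (Sum.inr j)) = A i j) :
    ∃ C : Matrix (Fin m) (Fin m) R, C * A = N • (1 : Matrix (Fin m) (Fin m) R) := by
  choose v hv using fun j => hlevel (b.coord (Sum.inr j))
  refine ⟨Matrix.of (fun j i => b.repr (v j) (Sum.inl i)), ?_⟩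
  ext j k
  rw [Matrix.mul_apply]
  have hBv : B (v j) (b (Sum.inr k)) = ∑ i, b.repr (v j) (Sum.inl i) * A i k := by
    conv_lhs => rw [← b.sum_repr (v j)]
    rw [map_sum, LinearMap.sum_apply, Fintype.sum_sum_type]
    have h1 : ∀ i : Fin m,
        (B ((b.repr (v j)) (Sum.inl i) • b (Sum.inl i))) (b (Sum.inr k))
          = b.repr (v j) (Sum.inl i) * A i k := fun i => by
      rw [_root_.map_smul, LinearMap.smul_apply, smul_eq_mul, hef]
    have h2 : ∀ i : Fin m,
        (B ((b.repr (v j)) (Sum.inr i) • b (Sum.inr i))) (b (Sum.inr k)) = 0 := fun i => by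
      rw [_root_.map_smul, LinearMap.smul_apply, smul_eq_mul, hff, mul_zero]
    rw [Finset.sum_congr rfl (fun i _ => h1 i), Finset.sum_congr rfl (fun i _ => h2 i)]
    simp
  have hNj := hv j (b (Sum.inr k))
  rw [hBv] at hNj
  calc ∑ i, (Matrix.of fun j i => b.repr (v j) (Sum.inl i)) j i * A i k
      = ∑ i, b.repr (v j) (Sum.inl i) * A i k := rfl
  _ = N * (b.coord (Sum.inr j)) (b (Sum.inr k)) := hNj.symm
  _ = (N • (1 : Matrix (Fin m) (Fin m) R)) j k := by
      rw [Module.Basis.coord_apply, Module.Basis.repr_self, Matrix.smul_apply, Matrix.one_apply,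
        smul_eq_mul, Finsupp.single_apply]
      by_cases h : j = k
      · subst h; rw [if_pos rfl, if_pos rfl]
      · rw [if_neg (show ¬ (Sum.inr k : Fin m ⊕ Fin m) = Sum.inr j from
          fun hh => h (Sum.inr_injective hh).symm), if_neg h]

theorem part1 {m : ℕ} (B : LinearMap.BilinForm R Λ) {N : R} (hNsf : Squarefree N)
    (hlevel : ∀ φ : Λ →ₗ[R] R, ∃ v : Λ, ∀ x, N * φ x = B v x)
    (b : Module.Basis (Fin m ⊕ Fin m) R Λ) (A : Matrix (Fin m) (Fin m) R)
    (hff : ∀ i j, B (b (Sum.inr i)) (b (Sum.inr j)) = 0)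
    (hef : ∀ i j, B (b (Sum.inl i)) (b (Sum.inr j)) = A i j)
    (hAdet : A.det ≠ 0)
    (dt : Fin m → R) (hdtN : ∀ i, dt i ∣ N)
    (hdtD : Associated (∏ i, dt i) A.det) :
    ∃ et ft : Fin m → Λ,
      LinearIndependent R et ∧
      Submodule.span R (Set.range et)
        = Submodule.span R (Set.range fun i => b (Sum.inl i)) ∧
      LinearIndependent R ft ∧
      Submodule.span R (Set.range ft)
        = Submodule.span R (Set.range fun i => b (Sum.inr i)) ∧
      ∀ i j, B (et i) (ft j) = if i = j then dt i else 0 := by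
  obtain ⟨P, Q, hP, hQ, hPAQ⟩ :=
    key_matrix hNsf hAdet (level_matrix B hlevel b A hff hef) hdtN hdtD
  have he : LinearIndependent R (fun i => b (Sum.inl i)) :=
    b.linearIndependent.comp Sum.inl Sum.inl_injective
  have hf : LinearIndependent R (fun i => b (Sum.inr i)) :=
    b.linearIndependent.comp Sum.inr Sum.inr_injective
  obtain ⟨hetind, hetspan⟩ := unit_change he P hP
  obtain ⟨hftind, hftspan⟩ := unit_change hf Q.transpose (by rw [Matrix.det_transpose]; exact hQ)
  refine ⟨fun i => ∑ k, P i k • b (Sum.inl k), fun j => ∑ k, Q.transpose j k • b (Sum.inr k),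
    hetind, hetspan, hftind, hftspan, ?_⟩
  intro i j
  have hBij : B (∑ k, P i k • b (Sum.inl k)) (∑ l, Q.transpose j l • b (Sum.inr l))
      = ∑ k, ∑ l, P i k * (A k l * Q l j) := by
    simp only [map_sum, _root_.map_smul, LinearMap.sum_apply, LinearMap.smul_apply,
      smul_eq_mul, Finset.mul_sum]
    rw [Finset.sum_comm]
    refine Finset.sum_congr rfl fun k _ => ?_
    refine Finset.sum_congr rfl fun l _ => ?_
    rw [hef, Matrix.transpose_apply]
    ring
  have hmul : (P * A * Q) i j = ∑ k, ∑ l, P i k * (A k l * Q l j) := by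
    calc (P * A * Q) i j = ∑ l, (∑ k, P i k * A k l) * Q l j := by
          rw [Matrix.mul_apply]
          exact Finset.sum_congr rfl fun l _ => by rw [Matrix.mul_apply]
    _ = ∑ l, ∑ k, P i k * (A k l * Q l j) := by
          refine Finset.sum_congr rfl fun l _ => ?_
          rw [Finset.sum_mul]
          exact Finset.sum_congr rfl fun k _ => by ring
    _ = ∑ k, ∑ l, P i k * (A k l * Q l j) := Finset.sum_comm
  rw [hBij, ← hmul, hPAQ, Matrix.diagonal_apply]

end Part1


section Part2Helpers

variable {Λ : Type*} [AddCommGroup Λ] [Module R Λ]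

theorem skew (B : LinearMap.BilinForm R Λ) (halt : ∀ x, B x x = 0) (x y : Λ) :
    B y x = - B x y := by
  have h0 := halt (x + y)
  simp only [map_add, LinearMap.add_apply] at h0
  linear_combination h0 - halt x - halt y

theorem span_isotropic {κ : Type*} (B : LinearMap.BilinForm R Λ) {v : κ → Λ}
    (h : ∀ i j, B (v i) (v j) = 0) {x y : Λ}
    (hx : x ∈ Submodule.span R (Set.range v)) (hy : y ∈ Submodule.span R (Set.range v)) :
    B x y = 0 := by
  have h1 : ∀ i, B (v i) y = 0 := by
    intro i
    have hker : Submodule.span R (Set.range v) ≤ LinearMap.ker (B (v i)) :=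
      Submodule.span_le.mpr (by rintro _ ⟨j, rfl⟩; exact LinearMap.mem_ker.mpr (h i j))
    exact LinearMap.mem_ker.mp (hker hy)
  have hker2 : Submodule.span R (Set.range v) ≤ LinearMap.ker (B.flip y) :=
    Submodule.span_le.mpr (by
      rintro _ ⟨i, rfl⟩
      exact LinearMap.mem_ker.mpr (h1 i))
  exact LinearMap.mem_ker.mp (hker2 hx)

theorem range_basis_split {m : ℕ} (b : Module.Basis (Fin m ⊕ Fin m) R Λ) :
    Set.range b = Set.range (fun i => b (Sum.inl i)) ∪ Set.range (fun i => b (Sum.inr i)) := by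
  ext x
  constructor
  · rintro ⟨i | i, rfl⟩
    · exact Or.inl ⟨i, rfl⟩
    · exact Or.inr ⟨i, rfl⟩
  · rintro (⟨i, rfl⟩ | ⟨i, rfl⟩)
    · exact ⟨Sum.inl i, rfl⟩
    · exact ⟨Sum.inr i, rfl⟩

/-- From `part1` data, a new basis of `Λ`. -/
noncomputable def mkBasis {m : ℕ} (b : Module.Basis (Fin m ⊕ Fin m) R Λ) {et ft : Fin m → Λ}
    (hetind : LinearIndependent R et)
    (hetspan : Submodule.span R (Set.range et)
      = Submodule.span R (Set.range fun i => b (Sum.inl i)))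
    (hftind : LinearIndependent R ft)
    (hftspan : Submodule.span R (Set.range ft)
      = Submodule.span R (Set.range fun i => b (Sum.inr i))) :
    Module.Basis (Fin m ⊕ Fin m) R Λ := by
  refine Module.Basis.mk (v := Sum.elim et ft) ?_ ?_
  · refine LinearIndependent.sum_type hetind hftind ?_
    rw [hetspan, hftspan]
    have h1 : (Set.range fun i => b (Sum.inl i)) = b '' (Set.range Sum.inl) := by
      rw [← Set.range_comp]; rfl
    have h2 : (Set.range fun i => b (Sum.inr i)) = b '' (Set.range Sum.inr) := by
      rw [← Set.range_comp]; rfl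
    rw [h1, h2]
    exact b.linearIndependent.disjoint_span_image Set.isCompl_range_inl_range_inr.disjoint
  · rw [Set.Sum.elim_range, Submodule.span_union, hetspan, hftspan,
      ← Submodule.span_union, ← range_basis_split, b.span_eq]

theorem mkBasis_apply {m : ℕ} (b : Module.Basis (Fin m ⊕ Fin m) R Λ) {et ft : Fin m → Λ}
    (h1 : LinearIndependent R et)
    (h2 : Submodule.span R (Set.range et)
      = Submodule.span R (Set.range fun i => b (Sum.inl i)))
    (h3 : LinearIndependent R ft)
    (h4 : Submodule.span R (Set.range ft)
      = Submodule.span R (Set.range fun i => b (Sum.inr i)))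
    (s : Fin m ⊕ Fin m) :
    mkBasis b h1 h2 h3 h4 s = Sum.elim et ft s := by
  rw [mkBasis, Module.Basis.mk_apply]

end Part2Helpers

end Stmt3Aux



/-- If a lattice of square-free level `N` has a basis splitting it into two
totally isotropic rank-`m` summands `M, M'` with pairing matrix `A` of determinant `D`
(up to units), then for any divisors `d̃_1,…,d̃_m` of `N` whose product is `D` up to a
unit, `M` and `M'` admit bases `ẽ, f̃` with `⟨ẽ i, f̃ j⟩ = d̃ i δ_{ij}`.  In particular
the isometry class of `(Λ, B)` is determined (for fixed `m` and `N`) by the class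
`D·R^×` of the determinant. -/
theorem stmt_3 (R : Type*) [CommRing R] [IsDomain R] [IsPrincipalIdealRing R]
    (Λ : Type*) [AddCommGroup Λ] [Module R Λ] [Module.Free R Λ] [Module.Finite R Λ]
    (m : ℕ) (B : LinearMap.BilinForm R Λ)
    (halt : ∀ x, B x x = 0)
    (N : R) (hN0 : N ≠ 0) (hNsf : Squarefree N)
    (hlevel : ∀ φ : Λ →ₗ[R] R, ∃ v : Λ, ∀ x, N * φ x = B v x)
    (b : Module.Basis (Fin m ⊕ Fin m) R Λ) (A : Matrix (Fin m) (Fin m) R)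
    (hee : ∀ i j, B (b (Sum.inl i)) (b (Sum.inl j)) = 0)
    (hff : ∀ i j, B (b (Sum.inr i)) (b (Sum.inr j)) = 0)
    (hef : ∀ i j, B (b (Sum.inl i)) (b (Sum.inr j)) = A i j)
    (hAdet : A.det ≠ 0)
    (dt : Fin m → R) (hdtN : ∀ i, dt i ∣ N)
    (hdtD : ∃ u : Rˣ, (∏ i, dt i) = (u : R) * A.det) :
    (∃ (et ft : Fin m → Λ),
      LinearIndependent R et ∧
      Submodule.span R (Set.range et) =
        Submodule.span R (Set.range fun i => b (Sum.inl i)) ∧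
      LinearIndependent R ft ∧
      Submodule.span R (Set.range ft) =
        Submodule.span R (Set.range fun i => b (Sum.inr i)) ∧
      (∀ i j, B (et i) (ft j) = if i = j then dt i else 0)) ∧
    -- in particular: any second lattice of the same kind with the same determinant
    -- class is isometric to `Λ`
    (∀ (Λ₂ : Type) (_ : AddCommGroup Λ₂), ∀ (_ : Module R Λ₂),
      ∀ (B₂ : LinearMap.BilinForm R Λ₂),
      (∀ x, B₂ x x = 0) →
      (∀ φ : Λ₂ →ₗ[R] R, ∃ v : Λ₂, ∀ x, N * φ x = B₂ v x) →
      ∀ (b₂ : Module.Basis (Fin m ⊕ Fin m) R Λ₂) (A₂ : Matrix (Fin m) (Fin m) R),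
      (∀ i j, B₂ (b₂ (Sum.inl i)) (b₂ (Sum.inl j)) = 0) →
      (∀ i j, B₂ (b₂ (Sum.inr i)) (b₂ (Sum.inr j)) = 0) →
      (∀ i j, B₂ (b₂ (Sum.inl i)) (b₂ (Sum.inr j)) = A₂ i j) →
      (∃ u : Rˣ, A.det = (u : R) * A₂.det) →
      ∃ φ : Λ ≃ₗ[R] Λ₂, ∀ x y, B₂ (φ x) (φ y) = B x y) := by
  classical
  have hdtD' : Associated (∏ i, dt i) A.det := by
    obtain ⟨u, hu⟩ := hdtD
    exact ⟨u⁻¹, by rw [hu, mul_comm ((u : R)) A.det, mul_assoc]; simp⟩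
  constructor
  · exact Stmt3Aux.part1 B hNsf hlevel b A hff hef hAdet dt hdtN hdtD'
  · intro Λ₂ _ _ B₂ halt₂ hlevel₂ b₂ A₂ hee₂ hff₂ hef₂ hdet
    obtain ⟨w, hw⟩ := hdet
    have hA₂det : A₂.det ≠ 0 := by
      intro h0
      exact hAdet (by rw [hw, h0, mul_zero])
    have hdtD₂ : Associated (∏ i, dt i) A₂.det := by
      refine hdtD'.trans ⟨w⁻¹, ?_⟩
      rw [hw, mul_comm ((w : R)) A₂.det, mul_assoc]
      simp
    obtain ⟨et, ft, he1, he2, he3, he4, he5⟩ :=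
      Stmt3Aux.part1 B hNsf hlevel b A hff hef hAdet dt hdtN hdtD'
    obtain ⟨et₂, ft₂, hf1, hf2, hf3, hf4, hf5⟩ :=
      Stmt3Aux.part1 B₂ hNsf hlevel₂ b₂ A₂ hff₂ hef₂ hA₂det dt hdtN hdtD₂
    let c : Module.Basis (Fin m ⊕ Fin m) R Λ := Stmt3Aux.mkBasis b he1 he2 he3 he4
    let c₂ : Module.Basis (Fin m ⊕ Fin m) R Λ₂ := Stmt3Aux.mkBasis b₂ hf1 hf2 hf3 hf4
    let φ : Λ ≃ₗ[R] Λ₂ := c.equiv c₂ (Equiv.refl _)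
    have hc : ∀ s, c s = Sum.elim et ft s := fun s =>
      Stmt3Aux.mkBasis_apply b he1 he2 he3 he4 s
    have hc₂ : ∀ s, c₂ s = Sum.elim et₂ ft₂ s := fun s =>
      Stmt3Aux.mkBasis_apply b₂ hf1 hf2 hf3 hf4 s
    have hφ : ∀ s, φ (c s) = c₂ s := fun s => by
      rw [show φ (c s) = c.equiv c₂ (Equiv.refl _) (c s) from rfl, Module.Basis.equiv_apply]
      rfl
    refine ⟨φ, ?_⟩
    have hetmem : ∀ i, et i ∈ Submodule.span R (Set.range fun i => b (Sum.inl i)) :=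
      fun i => he2 ▸ Submodule.subset_span (Set.mem_range_self i)
    have hftmem : ∀ i, ft i ∈ Submodule.span R (Set.range fun i => b (Sum.inr i)) :=
      fun i => he4 ▸ Submodule.subset_span (Set.mem_range_self i)
    have het₂mem : ∀ i, et₂ i ∈ Submodule.span R (Set.range fun i => b₂ (Sum.inl i)) :=
      fun i => hf2 ▸ Submodule.subset_span (Set.mem_range_self i)
    have hft₂mem : ∀ i, ft₂ i ∈ Submodule.span R (Set.range fun i => b₂ (Sum.inr i)) :=
      fun i => hf4 ▸ Submodule.subset_span (Set.mem_range_self i)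
    have key : (B₂.compl₁₂ (φ : Λ →ₗ[R] Λ₂) (φ : Λ →ₗ[R] Λ₂)) = B := by
      apply LinearMap.ext_basis c c
      intro s t
      rw [LinearMap.compl₁₂_apply]
      have hs : (φ : Λ →ₗ[R] Λ₂) (c s) = c₂ s := hφ s
      have ht : (φ : Λ →ₗ[R] Λ₂) (c t) = c₂ t := hφ t
      rw [hs, ht, hc s, hc t, hc₂ s, hc₂ t]
      rcases s with i | i <;> rcases t with j | j
      · simp only [Sum.elim_inl]
        rw [Stmt3Aux.span_isotropic B₂ hee₂ (het₂mem i) (het₂mem j),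
          Stmt3Aux.span_isotropic B hee (hetmem i) (hetmem j)]
      · simp only [Sum.elim_inl, Sum.elim_inr]
        rw [hf5 i j, he5 i j]
      · simp only [Sum.elim_inl, Sum.elim_inr]
        rw [Stmt3Aux.skew B₂ halt₂ (et₂ j) (ft₂ i), Stmt3Aux.skew B halt (et j) (ft i),
          hf5 j i, he5 j i]
      · simp only [Sum.elim_inr]
        rw [Stmt3Aux.span_isotropic B₂ hff₂ (hft₂mem i) (hft₂mem j),
          Stmt3Aux.span_isotropic B hff (hftmem i) (hftmem j)]
    intro x y
    calc B₂ (φ x) (φ y)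
        = (B₂.compl₁₂ (φ : Λ →ₗ[R] Λ₂) (φ : Λ →ₗ[R] Λ₂)) x y := rfl
    _ = B x y := by rw [key]
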